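/- Let G be a graph of order p with at least one edge and let m ≥ 1. Then the graphs D_m(D(G)) and D_{2m}(G) both have 2mp vertices, have equal energies (namely 2m·ε(G)), and are non-cospectral. -/

import Mathlib

open Matrix SimpleGraph Finset

variable {V W : Type*}

/-- The adjacency matrix of a simple graph over ℝ is Hermitian. -/
lemma adjMatrix_isHermitian [Fintype V] [DecidableEq V] (G : SimpleGraph V)
    [DecidableRel G.Adj] : (G.adjMatrix ℝ).IsHermitian := by
  rw [Matrix.IsHermitian, Matrix.conjTranspose_eq_transpose_of_trivial]
  exact G.isSymm_adjMatrix

/-- The energy of a finite simple graph: the sum of the absolute values of the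
eigenvalues of its real adjacency matrix. -/
noncomputable def graphEnergy [Fintype V] [DecidableEq V] (G : SimpleGraph V) : ℝ := by
  classical
  exact ∑ i, |(adjMatrix_isHermitian G).eigenvalues i|

/-- The spectrum of a finite simple graph: the multiset of eigenvalues (with
multiplicity) of its real adjacency matrix. -/
noncomputable def graphSpectrum [Fintype V] [DecidableEq V] (G : SimpleGraph V) : Multiset ℝ := by
  classical
  exact Finset.univ.val.map (adjMatrix_isHermitian G).eigenvalues

/-- A graph is integral if every eigenvalue of its adjacency matrix is an integer. -/
def IsIntegralGraph [Fintype V] [DecidableEq V] (G : SimpleGraph V) : Prop :=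
  ∀ x ∈ graphSpectrum G, ∃ k : ℤ, x = (k : ℝ)

/-- The m-shadow graph of `G`, on vertex set `Fin m × V`: `(i,u)` and `(j,v)` are
adjacent iff `u` and `v` are adjacent in `G`. -/
def shadowGraph (m : ℕ) (G : SimpleGraph V) : SimpleGraph (Fin m × V) where
  Adj x y := G.Adj x.2 y.2
  symm := ⟨fun _ _ h => h.symm⟩
  loopless := ⟨fun _ h => G.loopless.irrefl _ h⟩

/-- The duplicate graph of `G`, on vertex set `V ⊕ V`: `inl a` is adjacent to
`inr b` iff `a` and `b` are adjacent in `G`; no other adjacencies. -/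
def duplicateGraph (G : SimpleGraph V) : SimpleGraph (V ⊕ V) where
  Adj x y :=
    match x, y with
    | Sum.inl a, Sum.inr b => G.Adj a b
    | Sum.inr a, Sum.inl b => G.Adj a b
    | _, _ => False
  symm := ⟨by rintro (a | a) (b | b) h <;> first | exact h.symm | exact h.elim⟩
  loopless := ⟨by rintro (a | a) h <;> exact h⟩

/-- The Kronecker (tensor) product of two simple graphs. -/
def tensorGraph (G : SimpleGraph V) (H : SimpleGraph W) : SimpleGraph (V × W) where
  Adj x y := G.Adj x.1 y.1 ∧ H.Adj x.2 y.2
  symm := ⟨fun _ _ h => ⟨h.1.symm, h.2.symm⟩⟩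
  loopless := ⟨fun _ h => G.loopless.irrefl _ h.1⟩

/-- The m-splitting graph of `G`, on vertex set `V ⊕ (Fin m × V)`: original
vertices keep their adjacencies, an original vertex `u` is adjacent to a copy
`(i,v)` iff `u` is adjacent to `v` in `G`, and copies are pairwise non-adjacent. -/
def splittingGraph (m : ℕ) (G : SimpleGraph V) : SimpleGraph (V ⊕ (Fin m × V)) where
  Adj x y :=
    match x, y with
    | Sum.inl u, Sum.inl v => G.Adj u v
    | Sum.inl u, Sum.inr iv => G.Adj u iv.2
    | Sum.inr iu, Sum.inl v => G.Adj iu.2 v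
    | Sum.inr _, Sum.inr _ => False
  symm := ⟨by rintro (u | iu) (v | iv) h <;> first | exact h.symm | exact h.elim⟩
  loopless := ⟨by rintro (u | iu) h <;> first | exact G.loopless.irrefl _ h | exact h⟩

/-- The join of two simple graphs: their disjoint union together with all edges
between the two parts. -/
def joinGraph (G : SimpleGraph V) (H : SimpleGraph W) : SimpleGraph (V ⊕ W) where
  Adj x y :=
    match x, y with
    | Sum.inl a, Sum.inl b => G.Adj a b
    | Sum.inr a, Sum.inr b => H.Adj a b
    | _, _ => True
  symm := ⟨by rintro (a | a) (b | b) h <;> first | exact h.symm | trivial⟩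
  loopless := ⟨by rintro (a | a) h <;> first | exact G.loopless.irrefl _ h | exact H.loopless.irrefl _ h⟩

/-- The superpath graph on a sequence of part sizes: independent sets `W i` of
size `a i`, where vertices in parts `i` and `j` are adjacent iff `|i - j| = 1`. -/
def superpathGraph {t : ℕ} (a : Fin t → ℕ) : SimpleGraph (Σ i : Fin t, Fin (a i)) where
  Adj x y := (x.1 : ℕ) + 1 = (y.1 : ℕ) ∨ (y.1 : ℕ) + 1 = (x.1 : ℕ)
  symm := ⟨fun _ _ h => h.symm⟩
  loopless := ⟨fun x h => by omega⟩

section SpectrumHelpers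
open Polynomial

variable {n : Type*} [Fintype n] [DecidableEq n]

lemma myCharpoly_conj (P M Q : Matrix n n ℝ) (h : P * Q = 1) :
    (P * M * Q).charpoly = M.charpoly := by
  have hc : (P.map (C : ℝ →+* ℝ[X])) * (Q.map C) = 1 := by
    rw [← Matrix.map_mul, h]
    exact Matrix.map_one _ (map_zero C) (map_one C)
  have hcm : charmatrix (P * M * Q) = P.map C * charmatrix M * Q.map C := by
    unfold charmatrix
    rw [Matrix.mul_sub, Matrix.sub_mul]
    congr 1
    · rw [scalar_apply, ← smul_one_eq_diagonal, Matrix.mul_smul, Matrix.smul_mul, Matrix.mul_one, hc]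
    · simp only [RingHom.mapMatrix_apply, Matrix.map_mul]
  rw [Matrix.charpoly, hcm, Matrix.det_mul, Matrix.det_mul, Matrix.charpoly]
  have : (P.map (C : ℝ →+* ℝ[X])).det * (Q.map C).det = 1 := by
    rw [← Matrix.det_mul, hc, Matrix.det_one]
  calc (P.map (C : ℝ →+* ℝ[X])).det * (charmatrix M).det * (Q.map C).det
      = (P.map (C : ℝ →+* ℝ[X])).det * (Q.map C).det * (charmatrix M).det := by ring
    _ = (charmatrix M).det := by rw [this, one_mul]

lemma myCharpoly_diagonal (d : n → ℝ) :
    (Matrix.diagonal d).charpoly = ∏ i, (X - C (d i)) := by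
  have : charmatrix (Matrix.diagonal d) = Matrix.diagonal fun i => X - C (d i) := by
    ext i j
    by_cases hij : i = j
    · subst hij; simp
    · simp [charmatrix_apply_ne _ _ _ hij, Matrix.diagonal_apply_ne _ hij]
  rw [Matrix.charpoly, this, Matrix.det_diagonal]

lemma myCharmatrix_blockDiagonal {o : Type*} [Fintype o] [DecidableEq o]
    (M : o → Matrix n n ℝ) :
    charmatrix (Matrix.blockDiagonal M) = Matrix.blockDiagonal fun k => charmatrix (M k) := by
  ext ⟨i, k⟩ ⟨j, l⟩
  by_cases hkl : k = l
  · subst hkl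
    by_cases hij : i = j
    · subst hij; simp
    · rw [charmatrix_apply_ne _ _ _ (by simp [hij])]
      simp [Matrix.blockDiagonal_apply, charmatrix_apply_ne _ _ _ hij]
  · rw [charmatrix_apply_ne _ _ _ (by simp [Prod.ext_iff, hkl])]
    simp [Matrix.blockDiagonal_apply, hkl]

lemma myCharpoly_blockDiagonal {o : Type*} [Fintype o] [DecidableEq o]
    (M : o → Matrix n n ℝ) :
    (Matrix.blockDiagonal M).charpoly = ∏ k, (M k).charpoly := by
  rw [Matrix.charpoly, myCharmatrix_blockDiagonal, Matrix.det_blockDiagonal]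
  rfl

lemma myCharpoly_smul_hermitian {A : Matrix n n ℝ} (hA : A.IsHermitian) (c : ℝ) :
    (c • A).charpoly = ∏ i, (X - C (c * hA.eigenvalues i)) := by
  have hU : (hA.eigenvectorUnitary : Matrix n n ℝ) * star (hA.eigenvectorUnitary : Matrix n n ℝ) = 1 :=
    (Matrix.mem_unitaryGroup_iff).mp hA.eigenvectorUnitary.2
  have hsp : c • A = (hA.eigenvectorUnitary : Matrix n n ℝ) *
      Matrix.diagonal (fun i => c * hA.eigenvalues i) * star (hA.eigenvectorUnitary : Matrix n n ℝ) := by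
    conv_lhs => rw [hA.spectral_theorem, Unitary.conjStarAlgAut_apply]
    rw [← smul_mul_assoc, ← mul_smul_comm, ← Matrix.diagonal_smul]
    congr 2
  rw [hsp, myCharpoly_conj _ _ _ hU, myCharpoly_diagonal]

lemma myRoots_prod (f : n → ℝ) :
    (∏ i, (X - C (f i))).roots = Finset.univ.val.map f := by
  rw [Finset.prod_eq_multiset_prod]
  have : Finset.univ.val.map (fun i => X - C (f i))
      = (Finset.univ.val.map f).map (fun a => X - C a) := by
    rw [Multiset.map_map]; rfl
  rw [this, Polynomial.roots_multiset_prod_X_sub_C]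

section JDecomp
variable (m : ℕ) [NeZero m]

noncomputable def Vmat : Matrix (Fin m) (Fin m) ℝ :=
  Matrix.of fun i j => if j = 0 then 1 else (if i = j then 1 else 0) - (if i = 0 then 1 else 0)

noncomputable def Wmat : Matrix (Fin m) (Fin m) ℝ :=
  Matrix.of fun i j => if i = 0 then (m : ℝ)⁻¹ else (if i = j then 1 else 0) - (m : ℝ)⁻¹

noncomputable def Dmat : Matrix (Fin m) (Fin m) ℝ :=
  Matrix.diagonal fun i => if i = 0 then (m : ℝ) else 0

lemma hm_ne : (m : ℝ) ≠ 0 := Nat.cast_ne_zero.mpr (NeZero.ne m)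

lemma Vmat_mul_Wmat : Vmat m * Wmat m = 1 := by
  have hm' : (m : ℝ) ≠ 0 := hm_ne m
  ext i j
  rw [Matrix.mul_apply, ← Finset.add_sum_erase _ _ (Finset.mem_univ (0 : Fin m))]
  have h00 : Vmat m i 0 * Wmat m 0 j = (m : ℝ)⁻¹ := by
    simp [Vmat, Wmat]
  rw [h00]
  by_cases hi : i = 0
  · subst hi
    have e1 : ∀ k ∈ Finset.univ.erase (0 : Fin m),
        Vmat m 0 k * Wmat m k j = (m : ℝ)⁻¹ - (if k = j then 1 else 0) := by
      intro k hk
      have hk0 : k ≠ 0 := (Finset.mem_erase.mp hk).1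
      rcases eq_or_ne k j with rfl | hkj
      · simp [Vmat, Wmat, hk0, Ne.symm hk0]
        try ring
      · simp [Vmat, Wmat, hk0, Ne.symm hk0, hkj]
        try ring
    rw [Finset.sum_congr rfl e1, Finset.sum_sub_distrib, Finset.sum_const,
      Finset.card_erase_of_mem (Finset.mem_univ _), Finset.card_univ, Fintype.card_fin,
      Finset.sum_ite_eq' (Finset.univ.erase (0 : Fin m)) j (fun _ => (1:ℝ))]
    have hcast : ((m - 1 : ℕ) : ℝ) = (m : ℝ) - 1 := by
      have : 1 ≤ m := Nat.one_le_iff_ne_zero.mpr (NeZero.ne m)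
      push_cast [this]; ring
    simp only [nsmul_eq_mul, hcast, Finset.mem_erase, Finset.mem_univ, and_true,
      Matrix.one_apply]
    by_cases hj : j = 0
    · subst hj; simp; field_simp; ring
    · rw [if_neg (fun h : (0:Fin m) = j => hj h.symm), if_pos hj]
      field_simp
      ring
  · have e1 : ∀ k ∈ Finset.univ.erase (0 : Fin m),
        Vmat m i k * Wmat m k j =
          if i = k then ((if k = j then (1:ℝ) else 0) - (m : ℝ)⁻¹) else 0 := by
      intro k hk
      have hk0 : k ≠ 0 := (Finset.mem_erase.mp hk).1
      rcases eq_or_ne i k with rfl | h1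
      · rcases eq_or_ne i j with rfl | hij
        · simp [Vmat, Wmat, hk0, Ne.symm hk0, hi]
          try ring
        · simp [Vmat, Wmat, hk0, Ne.symm hk0, hi, hij]
          try ring
      · rcases eq_or_ne k j with rfl | hkj
        · simp [Vmat, Wmat, hk0, Ne.symm hk0, hi, h1]
          try ring
        · simp [Vmat, Wmat, hk0, Ne.symm hk0, hi, h1, hkj]
          try ring
    rw [Finset.sum_congr rfl e1, Finset.sum_ite_eq (Finset.univ.erase (0 : Fin m)) i]
    rw [if_pos (Finset.mem_erase.mpr ⟨hi, Finset.mem_univ _⟩)]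
    simp only [Matrix.one_apply]
    by_cases hij : i = j <;> simp [hij]

lemma Vmat_mul_Dmat : Vmat m * Dmat m = Matrix.of fun _ k => if k = 0 then (m : ℝ) else 0 := by
  ext i k
  rw [Dmat, Matrix.mul_diagonal]
  by_cases hk : k = 0
  · subst hk; simp [Vmat]
  · simp [hk]

lemma Vmat_mul_Dmat_mul_Wmat : Vmat m * Dmat m * Wmat m = Matrix.of fun _ _ => (1:ℝ) := by
  rw [Vmat_mul_Dmat]
  ext i j
  rw [Matrix.mul_apply]
  have : ∀ k : Fin m, (Matrix.of fun _ k => if k = 0 then (m : ℝ) else 0) i k * Wmat m k j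
      = if k = 0 then (m : ℝ) * (m : ℝ)⁻¹ else 0 := by
    intro k
    by_cases hk : k = 0
    · subst hk; simp [Wmat]
    · simp [hk]
  rw [Finset.sum_congr rfl (fun k _ => this k),
    Finset.sum_ite_eq' Finset.univ (0 : Fin m) (fun _ => (m:ℝ) * (m:ℝ)⁻¹)]
  simp [mul_inv_cancel₀ (hm_ne m)]

end JDecomp

open Kronecker in
lemma charpoly_ones_kronecker (m : ℕ) [NeZero m] (B : Matrix n n ℝ) :
    ((Matrix.of fun _ _ => (1:ℝ) : Matrix (Fin m) (Fin m) ℝ) ⊗ₖ B).charpoly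
      = ((m : ℝ) • B).charpoly * (X : ℝ[X]) ^ ((m - 1) * Fintype.card n) := by
  have h1 : (Matrix.of fun _ _ => (1:ℝ) : Matrix (Fin m) (Fin m) ℝ) ⊗ₖ B
      = (Vmat m ⊗ₖ (1 : Matrix n n ℝ)) * (Dmat m ⊗ₖ B) * (Wmat m ⊗ₖ (1 : Matrix n n ℝ)) := by
    rw [← Matrix.mul_kronecker_mul, ← Matrix.mul_kronecker_mul, Vmat_mul_Dmat_mul_Wmat,
      one_mul, mul_one]
  have hinv : (Vmat m ⊗ₖ (1 : Matrix n n ℝ)) * (Wmat m ⊗ₖ (1 : Matrix n n ℝ)) = 1 := by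
    rw [← Matrix.mul_kronecker_mul, Vmat_mul_Wmat, mul_one, Matrix.one_kronecker_one]
  rw [h1, myCharpoly_conj _ _ _ hinv]
  have h2 : Dmat m ⊗ₖ B = Matrix.reindex (Equiv.prodComm n (Fin m)) (Equiv.prodComm n (Fin m))
      (Matrix.blockDiagonal fun i : Fin m => (if i = 0 then (m:ℝ) else 0) • B) := by
    ext ⟨i, u⟩ ⟨j, v⟩
    by_cases hij : i = j
    · subst hij
      simp only [Matrix.kroneckerMap_apply, Dmat, Matrix.diagonal_apply_eq,
        Matrix.reindex_apply, Matrix.submatrix_apply, Equiv.prodComm_symm, Equiv.prodComm_apply,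
        Prod.swap_prod_mk, Matrix.blockDiagonal_apply, if_pos rfl]
      by_cases h0 : i = 0 <;> simp [h0]
    · simp [Dmat, Matrix.blockDiagonal_apply, Matrix.diagonal_apply_ne _ hij, hij]
  rw [h2, Matrix.charpoly_reindex, myCharpoly_blockDiagonal,
    ← Finset.mul_prod_erase Finset.univ _ (Finset.mem_univ (0 : Fin m)), if_pos rfl]
  have hzero : ∀ i ∈ Finset.univ.erase (0 : Fin m),
      ((if i = 0 then (m:ℝ) else 0) • B).charpoly = (X : ℝ[X]) ^ Fintype.card n := by
    intro i hi
    rw [if_neg (Finset.mem_erase.mp hi).1, zero_smul]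
    have h0 : (0 : Matrix n n ℝ) = Matrix.diagonal (fun _ => (0:ℝ)) := by simp
    rw [h0, myCharpoly_diagonal]
    simp [Finset.prod_const, Finset.card_univ]
  rw [Finset.prod_congr rfl hzero, Finset.prod_const,
    Finset.card_erase_of_mem (Finset.mem_univ _), Finset.card_univ, Fintype.card_fin,
    ← pow_mul, mul_comm (Fintype.card n)]


/-- multiset of eigenvalues of a Hermitian matrix -/
noncomputable def specOf (A : Matrix n n ℝ) (hA : A.IsHermitian) : Multiset ℝ :=
  Finset.univ.val.map hA.eigenvalues

lemma specOf_congr {A B : Matrix n n ℝ} (h : A = B) (hA : A.IsHermitian)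
    (hB : B.IsHermitian) : specOf A hA = specOf B hB := by subst h; rfl

lemma specOf_eq_roots {A : Matrix n n ℝ} (hA : A.IsHermitian) :
    specOf A hA = A.charpoly.roots := by
  have h := myCharpoly_smul_hermitian hA 1
  rw [one_smul] at h
  rw [h, myRoots_prod, specOf]
  simp only [one_mul]

lemma decRel_congr {V : Type*} [Fintype V] [DecidableEq V] {G : SimpleGraph V}
    (h1 h2 : DecidableRel G.Adj) :
    @SimpleGraph.adjMatrix ℝ V G h1 _ _ = @SimpleGraph.adjMatrix ℝ V G h2 _ _ := by
  have : h1 = h2 := funext fun a => funext fun b => Subsingleton.elim _ _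
  rw [this]

lemma graphSpectrum_eq_specOf {V : Type*} [Fintype V] [DecidableEq V] (G : SimpleGraph V)
    [inst : DecidableRel G.Adj] :
    graphSpectrum G = specOf (G.adjMatrix ℝ) (adjMatrix_isHermitian G) := by
  unfold graphSpectrum
  exact specOf_congr (decRel_congr _ _) _ _

lemma graphEnergy_eq {V : Type*} [Fintype V] [DecidableEq V] (G : SimpleGraph V) :
    graphEnergy G = ((graphSpectrum G).map (fun x => |x|)).sum := by
  unfold graphEnergy graphSpectrum
  rw [Multiset.map_map, Finset.sum_eq_multiset_sum]
  rfl

instance {W : Type*} (m : ℕ) (H : SimpleGraph W) [DecidableRel H.Adj] :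
    DecidableRel (shadowGraph m H).Adj := fun x y => decidable_of_iff (H.Adj x.2 y.2) Iff.rfl

instance {W : Type*} (G : SimpleGraph W) [DecidableRel G.Adj] :
    DecidableRel (duplicateGraph G).Adj := fun x y =>
  match x, y with
  | Sum.inl _, Sum.inl _ => isFalse (fun h => h)
  | Sum.inl a, Sum.inr b => decidable_of_iff (G.Adj a b) Iff.rfl
  | Sum.inr a, Sum.inl b => decidable_of_iff (G.Adj a b) Iff.rfl
  | Sum.inr _, Sum.inr _ => isFalse (fun h => h)

open Kronecker in
lemma adjMatrix_shadowGraph {W : Type*} [Fintype W] [DecidableEq W] (m : ℕ)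
    (H : SimpleGraph W) [DecidableRel H.Adj] :
    (shadowGraph m H).adjMatrix ℝ =
      (Matrix.of fun _ _ => (1:ℝ) : Matrix (Fin m) (Fin m) ℝ) ⊗ₖ (H.adjMatrix ℝ) := by
  ext ⟨i, u⟩ ⟨j, v⟩
  rw [SimpleGraph.adjMatrix_apply]
  simp [shadowGraph, Matrix.kroneckerMap_apply]
  congr 1

lemma adjMatrix_duplicateGraph {W : Type*} [Fintype W] [DecidableEq W]
    (G : SimpleGraph W) [DecidableRel G.Adj] :
    (duplicateGraph G).adjMatrix ℝ =
      Matrix.fromBlocks 0 (G.adjMatrix ℝ) (G.adjMatrix ℝ) 0 := by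
  ext x y
  rcases x with a | a <;> rcases y with b | b <;> rw [SimpleGraph.adjMatrix_apply] <;>
    simp [duplicateGraph, Matrix.fromBlocks] <;> congr 1

lemma spec_shadow {W : Type*} [Fintype W] [DecidableEq W] (H : SimpleGraph W)
    [DecidableRel H.Adj] (m : ℕ) [NeZero m] :
    graphSpectrum (shadowGraph m H) =
      (graphSpectrum H).map (fun x => (m : ℝ) * x) +
        Multiset.replicate ((m - 1) * Fintype.card W) 0 := by
  rw [graphSpectrum_eq_specOf (shadowGraph m H), specOf_eq_roots,
    adjMatrix_shadowGraph m H, charpoly_ones_kronecker m (H.adjMatrix ℝ),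
    Polynomial.roots_mul (mul_ne_zero (Matrix.charpoly_monic _).ne_zero
      (pow_ne_zero _ Polynomial.X_ne_zero))]
  congr 1
  · rw [myCharpoly_smul_hermitian (adjMatrix_isHermitian H), myRoots_prod,
      graphSpectrum_eq_specOf H, specOf, Multiset.map_map]
    rfl
  · rw [Polynomial.roots_pow, Polynomial.roots_X, Multiset.nsmul_singleton]

lemma spec_duplicate {W : Type*} [Fintype W] [DecidableEq W] (G : SimpleGraph W)
    [DecidableRel G.Adj] :
    graphSpectrum (duplicateGraph G) =
      graphSpectrum G + (graphSpectrum G).map (fun x => -x) := by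
  classical
  set A := G.adjMatrix ℝ with hA
  set P : Matrix (W ⊕ W) (W ⊕ W) ℝ := Matrix.fromBlocks 1 1 1 (-1) with hP
  set Q : Matrix (W ⊕ W) (W ⊕ W) ℝ := (2:ℝ)⁻¹ • P with hQ
  have hPQ : P * Q = 1 := by
    rw [hQ, mul_smul_comm, hP, Matrix.fromBlocks_multiply]
    simp only [mul_one, one_mul, mul_neg, neg_mul, neg_neg, add_neg_cancel, neg_add_cancel]
    rw [show ((1:Matrix W W ℝ) + 1) = (2:ℝ) • 1 from by rw [two_smul]]
    rw [show Matrix.fromBlocks ((2:ℝ) • (1:Matrix W W ℝ)) 0 0 ((2:ℝ) • (1:Matrix W W ℝ))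
        = (2:ℝ) • Matrix.fromBlocks (1:Matrix W W ℝ) 0 0 1 from by
      rw [Matrix.fromBlocks_smul]; simp]
    rw [Matrix.fromBlocks_one, smul_smul]
    norm_num
  have hconj : P * Matrix.fromBlocks A 0 0 (-A) * Q = Matrix.fromBlocks 0 A A 0 := by
    have h2 : P * Matrix.fromBlocks A 0 0 (-A) * P
        = Matrix.fromBlocks 0 ((2:ℝ) • A) ((2:ℝ) • A) 0 := by
      rw [hP, Matrix.fromBlocks_multiply, Matrix.fromBlocks_multiply]
      simp only [one_mul, mul_one, mul_zero, zero_mul, add_zero, zero_add, mul_neg, neg_mul,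
        neg_neg, Matrix.neg_mul, Matrix.mul_neg]
      rw [two_smul]
      congr 1 <;> try abel
    rw [hQ, mul_smul_comm, h2, Matrix.fromBlocks_smul]
    simp [smul_smul]
  rw [graphSpectrum_eq_specOf (duplicateGraph G), specOf_eq_roots,
    adjMatrix_duplicateGraph G, ← hA, ← hconj, myCharpoly_conj _ _ _ hPQ,
    Matrix.charpoly_fromBlocks_zero₁₂,
    Polynomial.roots_mul (mul_ne_zero (Matrix.charpoly_monic _).ne_zero
      (Matrix.charpoly_monic _).ne_zero)]
  congr 1
  · rw [graphSpectrum_eq_specOf G, specOf_eq_roots]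
  · have hneg : -A = (-1 : ℝ) • A := by rw [neg_one_smul]
    rw [hneg, myCharpoly_smul_hermitian (adjMatrix_isHermitian G), myRoots_prod,
      graphSpectrum_eq_specOf G, specOf, Multiset.map_map]
    congr 1
    ext i
    simp

end SpectrumHelpers


/-- If `G` is a graph of order `p` with at least one edge and `m ≥ 1`, then
`D_m(D(G))` and `D_{2m}(G)` both have `2 * m * p` vertices, their energies are
both equal to `2m · ε(G)`, and they are non-cospectral. -/
theorem shadow_duplicate_equienergetic_noncospectral [Fintype V] [DecidableEq V]
    (G : SimpleGraph V) (p m : ℕ) (hp : Fintype.card V = p)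
    (hedge : ∃ u v, G.Adj u v) (hm : 1 ≤ m) :
    Fintype.card (Fin m × (V ⊕ V)) = 2 * m * p ∧
      Fintype.card (Fin (2 * m) × V) = 2 * m * p ∧
      graphEnergy (shadowGraph m (duplicateGraph G)) = 2 * (m : ℝ) * graphEnergy G ∧
      graphEnergy (shadowGraph (2 * m) G) = 2 * (m : ℝ) * graphEnergy G ∧
      graphSpectrum (shadowGraph m (duplicateGraph G)) ≠ graphSpectrum (shadowGraph (2 * m) G) := by
  classical
  haveI : NeZero m := ⟨by omega⟩
  haveI : NeZero (2 * m) := ⟨by omega⟩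
  obtain ⟨u, v, huv⟩ := hedge
  haveI instG : DecidableRel G.Adj := Classical.decRel _
  set S := graphSpectrum G with hS
  have hcard2 : Fintype.card (V ⊕ V) = 2 * p := by
    simp [Fintype.card_sum, hp]; ring
  have h1 : graphSpectrum (shadowGraph m (duplicateGraph G))
      = (S.map (fun x => (m:ℝ) * x) + (S.map (fun x => -x)).map (fun x => (m:ℝ) * x))
        + Multiset.replicate ((m - 1) * (2 * p)) 0 := by
    rw [spec_shadow (duplicateGraph G) m, spec_duplicate G, Multiset.map_add, hcard2]
  have h2 : graphSpectrum (shadowGraph (2 * m) G)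
      = S.map (fun x => ((2 * m : ℕ) : ℝ) * x)
        + Multiset.replicate ((2 * m - 1) * p) 0 := by
    rw [spec_shadow G (2 * m), hp]
  have hm0 : (0:ℝ) ≤ (m:ℝ) := by positivity
  refine ⟨by rw [Fintype.card_prod, Fintype.card_fin, hcard2]; ring,
    by rw [Fintype.card_prod, Fintype.card_fin, hp], ?_, ?_, ?_⟩
  · -- energy of shadow of duplicate
    rw [graphEnergy_eq, h1, Multiset.map_add, Multiset.map_add, Multiset.sum_add,
      Multiset.sum_add, Multiset.map_map, Multiset.map_map, Multiset.map_replicate,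
      Multiset.sum_replicate, Multiset.map_map]
    simp only [Function.comp]
    have ha : S.map (fun x => |(m:ℝ) * x|)
        = S.map (fun x => (m:ℝ) * |x|) :=
      Multiset.map_congr rfl fun x _ => by
        rw [abs_mul, abs_of_nonneg hm0]
    have hb : S.map (fun x => |(m:ℝ) * -x|)
        = S.map (fun x => (m:ℝ) * |x|) :=
      Multiset.map_congr rfl fun x _ => by
        rw [abs_mul, abs_neg, abs_of_nonneg hm0]
    rw [ha, hb, Multiset.sum_map_mul_left, graphEnergy_eq G]
    simp only [abs_zero, smul_zero]
    ring
  · -- energy of 2m-shadow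
    rw [graphEnergy_eq, h2, Multiset.map_add, Multiset.sum_add, Multiset.map_map,
      Multiset.map_replicate, Multiset.sum_replicate]
    simp only [Function.comp]
    have ha : S.map (fun x => |((2 * m : ℕ) : ℝ) * x|)
        = S.map (fun x => (2 * (m:ℝ)) * |x|) :=
      Multiset.map_congr rfl fun x _ => by
        rw [abs_mul, abs_of_nonneg (by positivity : (0:ℝ) ≤ ((2 * m : ℕ) : ℝ))]
        push_cast
        ring
    rw [ha, Multiset.sum_map_mul_left, graphEnergy_eq G]
    simp only [abs_zero, smul_zero]
    ring
  · -- non-cospectral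
    intro heq
    have hT : 0 < (S.map (fun x => x ^ 4)).sum := by
      have hA0 : G.adjMatrix ℝ ≠ 0 := by
        intro h0
        have := congrFun (congrFun h0 u) v
        simp [huv] at this
      obtain ⟨i0, hi0⟩ : ∃ i, (adjMatrix_isHermitian G).eigenvalues i ≠ 0 := by
        by_contra hall
        push_neg at hall
        apply hA0
        have hsp := (adjMatrix_isHermitian G).spectral_theorem
        have hdg : Matrix.diagonal (RCLike.ofReal ∘ (adjMatrix_isHermitian G).eigenvalues)
            = (0 : Matrix V V ℝ) := by
          have : (RCLike.ofReal ∘ (adjMatrix_isHermitian G).eigenvalues : V → ℝ)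
              = fun _ => 0 := funext fun i => by
            simp [hall i, RCLike.ofReal_real_eq_id]
          rw [this, Matrix.diagonal_zero]
        rw [hsp, hdg, Unitary.conjStarAlgAut_apply, Matrix.mul_zero, Matrix.zero_mul]
      rw [hS, graphSpectrum_eq_specOf G, specOf, Multiset.map_map,
        ← Finset.sum_eq_multiset_sum]
      exact Finset.sum_pos'
        (fun i _ => by simp only [Function.comp_apply]; positivity)
        ⟨i0, Finset.mem_univ _, by simp only [Function.comp_apply]; positivity⟩
    have hfun := congrArg (fun s : Multiset ℝ => (s.map (fun x => x ^ 4)).sum) heq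
    simp only [h1, h2, Multiset.map_add, Multiset.sum_add, Multiset.map_map,
      Multiset.map_replicate, Multiset.sum_replicate] at hfun
    simp only [Function.comp] at hfun
    have ha : S.map (fun x => ((m:ℝ) * x) ^ 4)
        = S.map (fun x => (m:ℝ) ^ 4 * x ^ 4) :=
      Multiset.map_congr rfl fun x _ => by ring
    have hb : S.map (fun x => ((m:ℝ) * -x) ^ 4)
        = S.map (fun x => (m:ℝ) ^ 4 * x ^ 4) :=
      Multiset.map_congr rfl fun x _ => by ring
    have hc : S.map (fun x => (((2 * m : ℕ) : ℝ) * x) ^ 4)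
        = S.map (fun x => (16 * (m:ℝ) ^ 4) * x ^ 4) :=
      Multiset.map_congr rfl fun x _ => by
        push_cast
        ring
    rw [ha, hb, hc, Multiset.sum_map_mul_left, Multiset.sum_map_mul_left] at hfun
    have hm4 : (0:ℝ) < (m:ℝ) ^ 4 := by
      have : (0:ℝ) < (m:ℝ) := by exact_mod_cast hm
      positivity
    norm_num at hfun
    nlinarith [mul_pos hm4 hT]
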